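/- With D_{n,x'} defined as above and assuming ∫dx₁…∫dxₙ e^{Re (A*)ⁿ(0^∞x₁…xₙ)} ≤ (ρ+ε)ⁿ for n ≥ n₀, one has for every n ≥ n₀, z₁', z₂' ∈ Ω and φ ∈ H_θ(Ω*): |⟨D_{n,z₁'}, φ⟩ − ⟨D_{n,z₂'}, φ⟩| ≤ ‖ψ(·)e^{−W(0^∞|·)}‖_θ ‖φ‖_∞ ((ρ+ε)θ/|λ|)ⁿ. -/

import Mathlib

open scoped BigOperators
open Filter Topology

noncomputable section

/-- The one-sided shift space on `d` symbols (also used for the backwards copy `Ω*`). -/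
abbrev Bsp (d : ℕ) := ℕ → Fin d

/-- `agree n x x'` : the first `n` coordinates of `x` and `x'` coincide (`x ∼ₙ x'`). -/
def agree {d : ℕ} (n : ℕ) (x x' : Bsp d) : Prop := ∀ i < n, x i = x' i

/-- `C` is a `θ`-Hölder constant for `f`. -/
def HolderC {d : ℕ} {E : Type*} [SeminormedAddGroup E] (θ : ℝ) (f : Bsp d → E) (C : ℝ) : Prop :=
  ∀ (n : ℕ) (x x' : Bsp d), agree n x x' → ‖f x - f x'‖ ≤ C * θ ^ n

/-- `C` is a `θ`-Hölder constant for a two-variable kernel on `X = Ω* × Ω`. -/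
def HolderC2 {d : ℕ} (θ : ℝ) (k : Bsp d → Bsp d → ℂ) (C : ℝ) : Prop :=
  ∀ (n : ℕ) (y y' x x' : Bsp d), agree n y y' → agree n x x' →
    ‖k y x - k y' x'‖ ≤ C * θ ^ n

/-- The one-sided shift `σ` (same formula for `σ*` on the backwards copy). -/
def shift {d : ℕ} (x : Bsp d) : Bsp d := fun i => x (i + 1)

/-- Prepend one symbol: `cons a x = (a x)` (for `Ω*` this appends `a` as the new `y₁`). -/
def cons {d : ℕ} (a : Fin d) (x : Bsp d) : Bsp d := fun n => if n = 0 then a else x (n - 1)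

/-- `prep y k x = (y_k … y_1 x)` : prepend the first `k` symbols of `y` (in reversed order) to `x`. -/
def prep {d : ℕ} (y : Bsp d) (k : ℕ) (x : Bsp d) : Bsp d :=
  fun n => if n < k then y (k - 1 - n) else x (n - k)

/-- `prepW s x = (x₁ … xₙ x)` where `s i = x_{i+1}`. -/
def prepW {d n : ℕ} (s : Fin n → Fin d) (x : Bsp d) : Bsp d :=
  fun m => if h : m < n then s ⟨m, h⟩ else x (m - n)

/-- `appW y s = (y x₁ … xₙ) ∈ Ω*` where `s i = x_{i+1}` (so the new `y₁` is `xₙ`). -/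
def appW {d n : ℕ} (y : Bsp d) (s : Fin n → Fin d) : Bsp d :=
  fun m => if h : m < n then s ⟨n - 1 - m, by omega⟩ else y (m - n)

/-- Birkhoff sum `Aⁿ(x) = Σ_{k<n} A(σᵏ x)`. -/
def birkhoff {d : ℕ} (A : Bsp d → ℂ) (n : ℕ) (x : Bsp d) : ℂ :=
  ∑ k ∈ Finset.range n, A (fun i => x (i + k))

/-- Ruelle operator with a priori probability weights `w` on the symbols. -/
def Ruelle {d : ℕ} (w : Fin d → ℝ) (A : Bsp d → ℂ) (φ : Bsp d → ℂ) (x : Bsp d) : ℂ :=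
  ∑ a : Fin d, (w a : ℂ) * (Complex.exp (A (cons a x)) * φ (cons a x))

/-- Koopman operator `U_B φ = e^B · (φ ∘ σ)`. -/
def Koop {d : ℕ} (B : Bsp d → ℂ) (φ : Bsp d → ℂ) (x : Bsp d) : ℂ :=
  Complex.exp (B x) * φ (shift x)

/-- The measures `D_{n,x'}` paired against `φ`, with reference symbol `o` (for `0^∞`). -/
def Dn {d : ℕ} (w : Fin d → ℝ) (A : Bsp d → ℂ) (W : Bsp d → Bsp d → ℂ) (ψ : Bsp d → ℂ)
    (lam : ℂ) (o : Fin d) (n : ℕ) (x' : Bsp d) (φ : Bsp d → ℂ) : ℂ :=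
  ∑ s : Fin n → Fin d, ((∏ i, w (s i) : ℝ) : ℂ) *
    (ψ (prepW s x') * (Complex.exp (birkhoff A n (prepW s x')) / lam ^ n) *
      Complex.exp (-(W (appW (fun _ => o) s) x')) * φ (appW (fun _ => o) s))

/-- base-point comparison:
`|⟨D_{n,z₁'},φ⟩ − ⟨D_{n,z₂'},φ⟩| ≤ ‖ψ(·)e^{−W(0^∞|·)}‖_θ ‖φ‖_∞ ((ρ+ε)θ/|λ|)ⁿ`. -/
theorem Dn_basepoint_comparison {d : ℕ} {θ : ℝ} (hθ0 : 0 < θ) (hθ1 : θ < 1)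
    (w : Fin d → ℝ) (hw : ∀ a, 0 ≤ w a) (o : Fin d)
    (A Astar : Bsp d → ℂ) (W : Bsp d → Bsp d → ℂ) (ψ : Bsp d → ℂ) (lam : ℂ)
    (hlam : lam ≠ 0) (Cψ Mφ ρ ε : ℝ) (n₀ : ℕ)
    (hker : ∀ (n : ℕ) (x'' : Bsp d) (s : Fin n → Fin d),
      birkhoff A n (prepW s x'') - W (appW (fun _ => o) s) x'' =
        birkhoff Astar n (appW (fun _ => o) s) - W (fun _ => o) (prepW s x''))
    (hints : ∀ n, n₀ ≤ n →
      ∑ s : Fin n → Fin d, (∏ i, w (s i)) *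
        Real.exp ((birkhoff Astar n (appW (fun _ => o) s)).re) ≤ (ρ + ε) ^ n)
    (hHol : HolderC θ (fun x => ψ x * Complex.exp (-(W (fun _ => o) x))) Cψ)
    (φ : Bsp d → ℂ) (hφ : ∀ y, ‖φ y‖ ≤ Mφ) :
    ∀ n, n₀ ≤ n → ∀ z₁ z₂ : Bsp d,
      ‖Dn w A W ψ lam o n z₁ φ - Dn w A W ψ lam o n z₂ φ‖ ≤
        Cψ * Mφ * (((ρ + ε) * θ) / ‖lam‖) ^ n := by

  intro n hn z₁ z₂
  have hMφ : 0 ≤ Mφ := le_trans (norm_nonneg _) (hφ z₁)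
  have hCψ : 0 ≤ Cψ := by
    have h := hHol 0 z₁ z₁ (fun i _ => rfl)
    simpa using h
  have hl0 : (0:ℝ) < ‖lam‖ := norm_pos_iff.mpr hlam
  set g : Bsp d → ℂ := fun x => ψ x * Complex.exp (-(W (fun _ => o) x)) with hg
  have key : ∀ (z : Bsp d) (s : Fin n → Fin d),
      ψ (prepW s z) * (Complex.exp (birkhoff A n (prepW s z)) / lam ^ n) *
        Complex.exp (-(W (appW (fun _ => o) s) z)) * φ (appW (fun _ => o) s)
      = g (prepW s z) *
        (Complex.exp (birkhoff Astar n (appW (fun _ => o) s)) / lam ^ n *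
          φ (appW (fun _ => o) s)) := by
    intro z s
    have hE : Complex.exp (birkhoff A n (prepW s z)) *
        Complex.exp (-(W (appW (fun _ => o) s) z)) =
        Complex.exp (-(W (fun _ => o) (prepW s z))) *
        Complex.exp (birkhoff Astar n (appW (fun _ => o) s)) := by
      rw [← Complex.exp_add, ← Complex.exp_add]
      congr 1
      linear_combination hker n z s
    simp only [hg, div_eq_mul_inv]
    linear_combination (ψ (prepW s z) * (lam ^ n)⁻¹ * φ (appW (fun _ => o) s)) * hE
  have hdiff : Dn w A W ψ lam o n z₁ φ - Dn w A W ψ lam o n z₂ φ =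
      ∑ s : Fin n → Fin d, ((∏ i, w (s i) : ℝ) : ℂ) *
        ((g (prepW s z₁) - g (prepW s z₂)) *
          (Complex.exp (birkhoff Astar n (appW (fun _ => o) s)) / lam ^ n *
            φ (appW (fun _ => o) s))) := by
    unfold Dn
    rw [← Finset.sum_sub_distrib]
    refine Finset.sum_congr rfl fun s _ => ?_
    rw [key z₁ s, key z₂ s]; ring
  rw [hdiff]
  have hbound : ∀ s : Fin n → Fin d,
      ‖((∏ i, w (s i) : ℝ) : ℂ) *
        ((g (prepW s z₁) - g (prepW s z₂)) *
          (Complex.exp (birkhoff Astar n (appW (fun _ => o) s)) / lam ^ n *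
            φ (appW (fun _ => o) s)))‖ ≤
      ((∏ i, w (s i)) * Real.exp ((birkhoff Astar n (appW (fun _ => o) s)).re)) *
        (Cψ * θ ^ n * Mφ / ‖lam‖ ^ n) := by
    intro s
    have hagree : agree n (prepW s z₁) (prepW s z₂) := by
      intro i hi
      simp [prepW, hi]
    have h1 : ‖g (prepW s z₁) - g (prepW s z₂)‖ ≤ Cψ * θ ^ n := hHol n _ _ hagree
    have hwprod : (0:ℝ) ≤ ∏ i, w (s i) := Finset.prod_nonneg fun i _ => hw _
    have hEnorm : ‖Complex.exp (birkhoff Astar n (appW (fun _ => o) s)) / lam ^ n‖ =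
        Real.exp ((birkhoff Astar n (appW (fun _ => o) s)).re) / ‖lam‖ ^ n := by
      rw [norm_div, Complex.norm_exp, norm_pow]
    rw [norm_mul, norm_mul, norm_mul, Complex.norm_real, Real.norm_eq_abs,
      abs_of_nonneg hwprod, hEnorm]
    have hφs := hφ (appW (fun _ => o) s)
    have hθn : (0:ℝ) ≤ θ ^ n := le_of_lt (pow_pos hθ0 n)
    have hexp : (0:ℝ) ≤ Real.exp ((birkhoff Astar n (appW (fun _ => o) s)).re) :=
      (Real.exp_pos _).le
    have hln : (0:ℝ) < ‖lam‖ ^ n := pow_pos hl0 n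
    calc (∏ i, w (s i)) * (‖g (prepW s z₁) - g (prepW s z₂)‖ *
          (Real.exp ((birkhoff Astar n (appW (fun _ => o) s)).re) / ‖lam‖ ^ n *
            ‖φ (appW (fun _ => o) s)‖))
        ≤ (∏ i, w (s i)) * ((Cψ * θ ^ n) *
          (Real.exp ((birkhoff Astar n (appW (fun _ => o) s)).re) / ‖lam‖ ^ n * Mφ)) := by
          apply mul_le_mul_of_nonneg_left _ hwprod
          apply mul_le_mul h1 _ _ (by positivity)
          · exact mul_le_mul_of_nonneg_left hφs (by positivity)
          · positivity
      _ = ((∏ i, w (s i)) * Real.exp ((birkhoff Astar n (appW (fun _ => o) s)).re)) *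
          (Cψ * θ ^ n * Mφ / ‖lam‖ ^ n) := by ring
  calc ‖∑ s : Fin n → Fin d, ((∏ i, w (s i) : ℝ) : ℂ) *
        ((g (prepW s z₁) - g (prepW s z₂)) *
          (Complex.exp (birkhoff Astar n (appW (fun _ => o) s)) / lam ^ n *
            φ (appW (fun _ => o) s)))‖
      ≤ ∑ s : Fin n → Fin d,
        ((∏ i, w (s i)) * Real.exp ((birkhoff Astar n (appW (fun _ => o) s)).re)) *
          (Cψ * θ ^ n * Mφ / ‖lam‖ ^ n) := by
        refine le_trans (norm_sum_le _ _) (Finset.sum_le_sum fun s _ => hbound s)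
    _ = (∑ s : Fin n → Fin d,
          (∏ i, w (s i)) * Real.exp ((birkhoff Astar n (appW (fun _ => o) s)).re)) *
          (Cψ * θ ^ n * Mφ / ‖lam‖ ^ n) := by rw [Finset.sum_mul]
    _ ≤ (ρ + ε) ^ n * (Cψ * θ ^ n * Mφ / ‖lam‖ ^ n) := by
        apply mul_le_mul_of_nonneg_right (hints n hn)
        positivity
    _ = Cψ * Mφ * (((ρ + ε) * θ) / ‖lam‖) ^ n := by
        rw [div_pow, mul_pow]; field_simp
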